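/- arXiv:2602.04694 — 3 statements merged into one kernel-verified Lean document; each statement's English description precedes it below -/
import Mathlib

section
/- For all nodes u in {0,...,n} of G and v in {0,...,m} of H, the dynamic-programming table value A_{u,v} equals the maximum of the score s(p) over all valid partial matchings p up to (u,v); that is, A_{u,v} = max_{p ∈ P_{u,v}} s(p). -/
/-- `a` is the parent of `b` (and `b` is not the root `0`). -/
def ChildRel {n : ℕ} (anc : Fin (n+1) → Fin (n+1)) (a b : Fin (n+1)) : Prop :=
  b ≠ 0 ∧ anc b = a

/-- `u <_T v`: `u` is a proper ancestor of `v`. -/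
def TreeLt {n : ℕ} (anc : Fin (n+1) → Fin (n+1)) : Fin (n+1) → Fin (n+1) → Prop :=
  Relation.TransGen (ChildRel anc)

/-- `u ≤_T v`: reflexive closure of the proper-ancestor relation. -/
def TreeLe {n : ℕ} (anc : Fin (n+1) → Fin (n+1)) : Fin (n+1) → Fin (n+1) → Prop :=
  Relation.ReflTransGen (ChildRel anc)

/-- A valid matching between the trees given by `ancG` and `ancH`. -/
def ValidMatching {n m : ℕ} (ancG : Fin (n+1) → Fin (n+1)) (ancH : Fin (m+1) → Fin (m+1))
    (p : List (Fin (n+1) × Fin (m+1))) : Prop :=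
  List.Chain' (fun x y => TreeLt ancG x.1 y.1 ∧ TreeLt ancH x.2 y.2) p

/-- A valid partial matching up to `(u, v)`. -/
def PartialUpTo {n m : ℕ} (ancG : Fin (n+1) → Fin (n+1)) (ancH : Fin (m+1) → Fin (m+1))
    (p : List (Fin (n+1) × Fin (m+1))) (u : Fin (n+1)) (v : Fin (m+1)) : Prop :=
  ValidMatching ancG ancH p ∧ ∀ q ∈ p.getLast?, TreeLe ancG q.1 u ∧ TreeLe ancH q.2 v

/-- A valid partial matching up to a pair of extended (possibly virtual `-1 = none`) nodes:
the only valid partial matching up to a pair with a virtual coordinate is the empty matching. -/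
def PartialUpToO {n m : ℕ} (ancG : Fin (n+1) → Fin (n+1)) (ancH : Fin (m+1) → Fin (m+1))
    (p : List (Fin (n+1) × Fin (m+1)))
    (u? : Option (Fin (n+1))) (v? : Option (Fin (m+1))) : Prop :=
  match u?, v? with
  | some u, some v => PartialUpTo ancG ancH p u v
  | _, _ => p = []

/-- Extended ancestor function: the parent of the root `0` is the virtual node `none` (i.e. `-1`). -/
def ancO {n : ℕ} (anc : Fin (n+1) → Fin (n+1)) (u : Fin (n+1)) : Option (Fin (n+1)) :=
  if u = 0 then none else some (anc u)

/-- The score of a matching. -/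
def score {n m : ℕ} {S : Type*} (w : S → S → ℝ)
    (φG : Fin (n+1) → S) (φH : Fin (m+1) → S)
    (p : List (Fin (n+1) × Fin (m+1))) : ℝ :=
  (p.map (fun q => w (φG q.1) (φH q.2))).sum


def optRank {k : ℕ} : Option (Fin k) → ℕ
  | none => 0
  | some u => u.val + 1

lemma treeLt_iff' {k : ℕ} (anc : Fin (k+1) → Fin (k+1)) (a b : Fin (k+1)) :
    TreeLt anc a b ↔ b ≠ 0 ∧ TreeLe anc a (anc b) := by
  constructor
  · intro h
    rcases (Relation.TransGen.tail'_iff).mp h with ⟨c, hc, hne, heq⟩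
    subst heq
    exact ⟨hne, hc⟩
  · rintro ⟨hne, h⟩
    exact Relation.TransGen.tail' h ⟨hne, rfl⟩

lemma treeLe_of_ne' {k : ℕ} (anc : Fin (k+1) → Fin (k+1)) {a b : Fin (k+1)}
    (h : TreeLe anc a b) (hne : a ≠ b) : b ≠ 0 ∧ TreeLe anc a (anc b) := by
  rcases Relation.ReflTransGen.cases_tail h with heq | ⟨c, hc, hne', heq⟩
  · exact absurd heq.symm hne
  · subst heq; exact ⟨hne', hc⟩

/-- **Score Correctness of the DP table.**
For all nodes `u` of `G` and `v` of `H`, the dynamic-programming table value `A (some u) (some v)`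
equals the maximum of the score `s(p)` over all valid partial matchings `p` up to `(u, v)`. -/
theorem dp_table_eq_max_partial_score
    (n m : ℕ) (ancG : Fin (n+1) → Fin (n+1)) (ancH : Fin (m+1) → Fin (m+1))
    (hG : ∀ v : Fin (n+1), v ≠ 0 → ancG v < v)
    (hH : ∀ v : Fin (m+1), v ≠ 0 → ancH v < v)
    {S : Type*} (φG : Fin (n+1) → S) (φH : Fin (m+1) → S)
    (w : S → S → ℝ) (hw : ∀ a b : S, 0 ≤ w a b)
    (A : Option (Fin (n+1)) → Option (Fin (m+1)) → ℝ)
    (hAbase1 : ∀ v? : Option (Fin (m+1)), A none v? = 0)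
    (hAbase2 : ∀ u? : Option (Fin (n+1)), A u? none = 0)
    (hArec : ∀ (u : Fin (n+1)) (v : Fin (m+1)),
      A (some u) (some v) =
        max (max (A (ancO ancG u) (some v)) (A (some u) (ancO ancH v)))
          (w (φG u) (φH v) + A (ancO ancG u) (ancO ancH v)))
    (u : Fin (n+1)) (v : Fin (m+1)) :
    IsGreatest {x : ℝ | ∃ p : List (Fin (n+1) × Fin (m+1)),
        PartialUpTo ancG ancH p u v ∧ score w φG φH p = x}
      (A (some u) (some v)) := by

  classical
  have hscore_nil : score w φG φH ([] : List (Fin (n+1) × Fin (m+1))) = 0 := by simp [score]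
  have hscore_concat : ∀ (q : List (Fin (n+1) × Fin (m+1))) (a : Fin (n+1) × Fin (m+1)),
      score w φG φH (q ++ [a]) = score w φG φH q + w (φG a.1) (φH a.2) := by
    intro q a; simp [score]
  have hempty : ∀ (u? : Option (Fin (n+1))) (v? : Option (Fin (m+1))),
      PartialUpToO ancG ancH [] u? v? := by
    intro u? v?
    match u?, v? with
    | some u, some v => exact ⟨List.isChain_nil, by simp⟩
    | none, none => rfl
    | none, some _ => rfl
    | some _, none => rfl
  have hrkG : ∀ u : Fin (n+1), optRank (ancO ancG u) ≤ u.val := by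
    intro u
    by_cases h : u = 0
    · simp [ancO, h, optRank]
    · have := hG u h
      simp only [ancO, h, if_false, optRank]
      omega
  have hrkH : ∀ v : Fin (m+1), optRank (ancO ancH v) ≤ v.val := by
    intro v
    by_cases h : v = 0
    · simp [ancO, h, optRank]
    · have := hH v h
      simp only [ancO, h, if_false, optRank]
      omega
  have key : ∀ (N : ℕ) (u? : Option (Fin (n+1))) (v? : Option (Fin (m+1))),
      optRank u? + optRank v? ≤ N →
      IsGreatest {x : ℝ | ∃ p : List (Fin (n+1) × Fin (m+1)),
        PartialUpToO ancG ancH p u? v? ∧ score w φG φH p = x} (A u? v?) := by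
    intro N
    induction N with
    | zero =>
      intro u? v? h
      match u?, v? with
      | none, _ =>
        rw [hAbase1]
        constructor
        · exact ⟨[], hempty _ _, hscore_nil⟩
        · rintro x ⟨p, hp, rfl⟩
          have : p = [] := hp
          rw [this, hscore_nil]
      | some u, none =>
        simp [optRank] at h
      | some u, some v =>
        simp [optRank] at h
    | succ N ih =>
      intro u? v? hN
      match u?, v? with
      | none, _ =>
        rw [hAbase1]
        constructor
        · exact ⟨[], hempty _ _, hscore_nil⟩
        · rintro x ⟨p, hp, rfl⟩
          have : p = [] := hp
          rw [this, hscore_nil]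
      | some u, none =>
        rw [hAbase2]
        constructor
        · exact ⟨[], hempty _ _, hscore_nil⟩
        · rintro x ⟨p, hp, rfl⟩
          have : p = [] := hp
          rw [this, hscore_nil]
      | some u, some v =>
        have e1 : optRank (some u) = u.val + 1 := rfl
        have e2 : optRank (some v) = v.val + 1 := rfl
        have hgu := hrkG u
        have hhv := hrkH v
        have h1 : IsGreatest {x : ℝ | ∃ p, PartialUpToO ancG ancH p (ancO ancG u) (some v) ∧
            score w φG φH p = x} (A (ancO ancG u) (some v)) := by
          apply ih
          omega
        have h2 : IsGreatest {x : ℝ | ∃ p, PartialUpToO ancG ancH p (some u) (ancO ancH v) ∧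
            score w φG φH p = x} (A (some u) (ancO ancH v)) := by
          apply ih
          omega
        have h3 : IsGreatest {x : ℝ | ∃ p, PartialUpToO ancG ancH p (ancO ancG u) (ancO ancH v) ∧
            score w φG φH p = x} (A (ancO ancG u) (ancO ancH v)) := by
          apply ih
          omega
        constructor
        · -- membership
          rw [hArec]
          -- three candidate elements
          have ha : A (ancO ancG u) (some v) ∈ {x : ℝ | ∃ p, PartialUpToO ancG ancH p (some u) (some v) ∧
              score w φG φH p = x} := by
            obtain ⟨p, hp, hs⟩ := h1.1
            refine ⟨p, ?_, hs⟩
            by_cases hu0 : u = 0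
            · have hpnil : p = [] := by
                simpa [ancO, hu0, PartialUpToO] using hp
              subst hpnil
              exact hempty (some u) (some v)
            · simp only [ancO, hu0, if_false, PartialUpToO] at hp ⊢
              obtain ⟨hchain, hlast⟩ := hp
              refine ⟨hchain, fun q hq => ?_⟩
              obtain ⟨hq1, hq2⟩ := hlast q hq
              exact ⟨hq1.tail ⟨hu0, rfl⟩, hq2⟩
          have hb : A (some u) (ancO ancH v) ∈ {x : ℝ | ∃ p, PartialUpToO ancG ancH p (some u) (some v) ∧
              score w φG φH p = x} := by
            obtain ⟨p, hp, hs⟩ := h2.1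
            refine ⟨p, ?_, hs⟩
            by_cases hv0 : v = 0
            · have hpnil : p = [] := by
                simpa [ancO, hv0, PartialUpToO] using hp
              subst hpnil
              exact hempty (some u) (some v)
            · simp only [ancO, hv0, if_false, PartialUpToO] at hp ⊢
              obtain ⟨hchain, hlast⟩ := hp
              refine ⟨hchain, fun q hq => ?_⟩
              obtain ⟨hq1, hq2⟩ := hlast q hq
              exact ⟨hq1, hq2.tail ⟨hv0, rfl⟩⟩
          have hc : w (φG u) (φH v) + A (ancO ancG u) (ancO ancH v) ∈
              {x : ℝ | ∃ p, PartialUpToO ancG ancH p (some u) (some v) ∧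
              score w φG φH p = x} := by
            obtain ⟨p, hp, hs⟩ := h3.1
            refine ⟨p ++ [(u, v)], ?_, ?_⟩
            · constructor
              · -- ValidMatching (p ++ [(u,v)])
                unfold ValidMatching List.Chain'
                rw [List.isChain_append]
                refine ⟨?_, List.isChain_singleton _, ?_⟩
                · by_cases hu0 : u = 0
                  · have : p = [] := by simpa [ancO, hu0, PartialUpToO] using hp
                    rw [this]; exact List.isChain_nil
                  · by_cases hv0 : v = 0
                    · have : p = [] := by simpa [ancO, hu0, hv0, PartialUpToO] using hp
                      rw [this]; exact List.isChain_nil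
                    · simp only [ancO, hu0, hv0, if_false, PartialUpToO] at hp
                      exact hp.1
                · intro x hx y hy
                  simp only [List.head?_cons, Option.mem_def, Option.some.injEq] at hy
                  subst hy
                  by_cases hu0 : u = 0
                  · have : p = [] := by simpa [ancO, hu0, PartialUpToO] using hp
                    rw [this] at hx; simp at hx
                  · by_cases hv0 : v = 0
                    · have : p = [] := by simpa [ancO, hu0, hv0, PartialUpToO] using hp
                      rw [this] at hx; simp at hx
                    · simp only [ancO, hu0, hv0, if_false, PartialUpToO] at hp
                      obtain ⟨hq1, hq2⟩ := hp.2 x hx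
                      exact ⟨(treeLt_iff' ancG x.1 u).mpr ⟨hu0, hq1⟩,
                        (treeLt_iff' ancH x.2 v).mpr ⟨hv0, hq2⟩⟩
              · intro q hq
                rw [List.getLast?_concat] at hq
                simp only [Option.mem_def, Option.some.injEq] at hq
                subst hq
                exact ⟨Relation.ReflTransGen.refl, Relation.ReflTransGen.refl⟩
            · rw [hscore_concat, hs]; ring
          rcases max_choice (max (A (ancO ancG u) (some v)) (A (some u) (ancO ancH v)))
              (w (φG u) (φH v) + A (ancO ancG u) (ancO ancH v)) with h | h
          · rw [h]
            rcases max_choice (A (ancO ancG u) (some v)) (A (some u) (ancO ancH v)) with h' | h'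
            · rw [h']; exact ha
            · rw [h']; exact hb
          · rw [h]; exact hc
        · -- upper bound
          rintro x ⟨p, hp, rfl⟩
          rw [hArec]
          rcases List.eq_nil_or_concat p with rfl | ⟨q, a, rfl⟩
          · rw [hscore_nil]
            have h0 : (0 : ℝ) ∈ {x : ℝ | ∃ p, PartialUpToO ancG ancH p (ancO ancG u) (ancO ancH v) ∧
                score w φG φH p = x} := ⟨[], hempty _ _, hscore_nil⟩
            have := h3.2 h0
            have hw' := hw (φG u) (φH v)
            calc (0:ℝ) ≤ w (φG u) (φH v) + A (ancO ancG u) (ancO ancH v) := by linarith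
              _ ≤ _ := le_max_right _ _
          · simp only [List.concat_eq_append] at hp ⊢
            obtain ⟨hchain, hlast⟩ := hp
            have hla := hlast a (by rw [List.getLast?_concat]; rfl)
            by_cases hau : a.1 = u
            · by_cases hbv : a.2 = v
              · -- last pair is exactly (u,v)
                have hqO : PartialUpToO ancG ancH q (ancO ancG u) (ancO ancH v) := by
                  rcases List.eq_nil_or_concat q with rfl | ⟨r, b, rfl⟩
                  · exact hempty _ _
                  · simp only [List.concat_eq_append] at hchain ⊢
                    unfold ValidMatching List.Chain' at hchain
                    rw [show (r ++ [b]) ++ [a] = r ++ ([b] ++ [a]) by simp,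
                      List.isChain_append] at hchain
                    obtain ⟨hcr, hcba, hlink⟩ := hchain
                    have hba : TreeLt ancG b.1 a.1 ∧ TreeLt ancH b.2 a.2 := by
                      rcases List.isChain_cons_cons.mp hcba with ⟨h', _⟩
                      exact h'
                    rw [hau, hbv] at hba
                    obtain ⟨hu0, hbanc⟩ := (treeLt_iff' ancG b.1 u).mp hba.1
                    obtain ⟨hv0, hbanc'⟩ := (treeLt_iff' ancH b.2 v).mp hba.2
                    simp only [ancO, hu0, hv0, if_false, PartialUpToO]
                    constructor
                    · -- chain' (r ++ [b])
                      unfold ValidMatching List.Chain'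
                      rw [List.isChain_append]
                      refine ⟨hcr, List.isChain_singleton _, ?_⟩
                      intro x hx y hy
                      simp only [List.head?_cons, Option.mem_def, Option.some.injEq] at hy
                      subst hy
                      exact hlink x hx b (by simp)
                    · intro c hc
                      rw [List.getLast?_concat] at hc
                      simp only [Option.mem_def, Option.some.injEq] at hc
                      subst hc
                      exact ⟨hbanc, hbanc'⟩
                have hq := h3.2 ⟨q, hqO, rfl⟩
                rw [hscore_concat, hau, hbv]
                have hle : score w φG φH q + w (φG u) (φH v) ≤
                    w (φG u) (φH v) + A (ancO ancG u) (ancO ancH v) := by linarith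
                exact hle.trans (le_max_right _ _)
              · -- a.2 ≠ v : use second coordinate recursion
                obtain ⟨hv0, hanc⟩ := treeLe_of_ne' ancH hla.2 hbv
                have hpO : PartialUpToO ancG ancH (q ++ [a]) (some u) (ancO ancH v) := by
                  simp only [ancO, hv0, if_false, PartialUpToO]
                  refine ⟨hchain, fun c hc => ?_⟩
                  rw [List.getLast?_concat] at hc
                  simp only [Option.mem_def, Option.some.injEq] at hc
                  subst hc
                  exact ⟨hla.1, hanc⟩
                have := h2.2 ⟨q ++ [a], hpO, rfl⟩
                exact this.trans ((le_max_right _ _).trans (le_max_left _ _))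
            · -- a.1 ≠ u : use first coordinate recursion
              obtain ⟨hu0, hanc⟩ := treeLe_of_ne' ancG hla.1 hau
              have hpO : PartialUpToO ancG ancH (q ++ [a]) (ancO ancG u) (some v) := by
                simp only [ancO, hu0, if_false, PartialUpToO]
                refine ⟨hchain, fun c hc => ?_⟩
                rw [List.getLast?_concat] at hc
                simp only [Option.mem_def, Option.some.injEq] at hc
                subst hc
                exact ⟨hanc, hla.2⟩
              have := h1.2 ⟨q ++ [a], hpO, rfl⟩
              exact this.trans ((le_max_left _ _).trans (le_max_left _ _))
  exact key (optRank (some u) + optRank (some v)) (some u) (some v) le_rfl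
end

section
/- The maximum of the table entries, max_{u ∈ {0,...,n}, v ∈ {0,...,m}} A_{u,v}, equals the similarity score s(G,H) = max_{p ∈ P} s(p), where P = ∪_{u,v} P_{u,v} is the set of all valid matchings between G and H. -/
lemma not_treeLt_zero {n : ℕ} (anc : Fin (n+1) → Fin (n+1)) (a : Fin (n+1)) :
    ¬ TreeLt anc a 0 := by
  intro h
  obtain ⟨b, -, hb⟩ := Relation.TransGen.tail'_iff.mp h
  exact hb.1 rfl

lemma treeLt_elim {n : ℕ} {anc : Fin (n+1) → Fin (n+1)} {a u : Fin (n+1)}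
    (h : TreeLt anc a u) : u ≠ 0 ∧ TreeLe anc a (anc u) := by
  obtain ⟨b, hb1, hb2⟩ := Relation.TransGen.tail'_iff.mp h
  exact ⟨hb2.1, hb2.2 ▸ hb1⟩

lemma treeLe_cases' {n : ℕ} {anc : Fin (n+1) → Fin (n+1)} {a u : Fin (n+1)}
    (h : TreeLe anc a u) : a = u ∨ (u ≠ 0 ∧ TreeLe anc a (anc u)) := by
  rcases Relation.ReflTransGen.cases_tail h with h | ⟨c, hc1, hc2⟩
  · exact Or.inl h.symm
  · exact Or.inr ⟨hc2.1, hc2.2 ▸ hc1⟩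

lemma treeLt_of_le_anc {n : ℕ} {anc : Fin (n+1) → Fin (n+1)} {a u : Fin (n+1)}
    (h : TreeLe anc a (anc u)) (hu : u ≠ 0) : TreeLt anc a u :=
  Relation.TransGen.tail' h ⟨hu, rfl⟩

lemma treeLe_of_le_anc {n : ℕ} {anc : Fin (n+1) → Fin (n+1)} {a u : Fin (n+1)}
    (h : TreeLe anc a (anc u)) (hu : u ≠ 0) : TreeLe anc a u :=
  (treeLt_of_le_anc h hu).to_reflTransGen

lemma partialUpToO_none_left {n m : ℕ} {ancG : Fin (n+1) → Fin (n+1)}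
    {ancH : Fin (m+1) → Fin (m+1)} {p : List (Fin (n+1) × Fin (m+1))}
    {v? : Option (Fin (m+1))} : PartialUpToO ancG ancH p none v? ↔ p = [] := by
  cases v? <;> rfl

lemma partialUpToO_none_right {n m : ℕ} {ancG : Fin (n+1) → Fin (n+1)}
    {ancH : Fin (m+1) → Fin (m+1)} {p : List (Fin (n+1) × Fin (m+1))}
    {u? : Option (Fin (n+1))} : PartialUpToO ancG ancH p u? none ↔ p = [] := by
  cases u? <;> rfl

lemma partialUpTo_nil {n m : ℕ} (ancG : Fin (n+1) → Fin (n+1))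
    (ancH : Fin (m+1) → Fin (m+1)) (u : Fin (n+1)) (v : Fin (m+1)) :
    PartialUpTo ancG ancH [] u v := ⟨List.isChain_nil, by simp⟩

lemma partialUpToO_nil {n m : ℕ} (ancG : Fin (n+1) → Fin (n+1))
    (ancH : Fin (m+1) → Fin (m+1)) (u? : Option (Fin (n+1))) (v? : Option (Fin (m+1))) :
    PartialUpToO ancG ancH [] u? v? := by
  cases u? <;> cases v? <;> first
    | rfl
    | exact partialUpTo_nil _ _ _ _

lemma score_nil {n m : ℕ} {S : Type*} (w : S → S → ℝ)
    (φG : Fin (n+1) → S) (φH : Fin (m+1) → S) : score w φG φH [] = 0 := rfl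

lemma score_concat {n m : ℕ} {S : Type*} (w : S → S → ℝ)
    (φG : Fin (n+1) → S) (φH : Fin (m+1) → S)
    (p : List (Fin (n+1) × Fin (m+1))) (q : Fin (n+1) × Fin (m+1)) :
    score w φG φH (p ++ [q]) = score w φG φH p + w (φG q.1) (φH q.2) := by
  simp [score]

lemma validMatching_of_partialUpToO {n m : ℕ} {ancG : Fin (n+1) → Fin (n+1)}
    {ancH : Fin (m+1) → Fin (m+1)} {p : List (Fin (n+1) × Fin (m+1))}
    {u? : Option (Fin (n+1))} {v? : Option (Fin (m+1))}
    (h : PartialUpToO ancG ancH p u? v?) : ValidMatching ancG ancH p := by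
  cases u? with
  | none => exact (partialUpToO_none_left.mp h) ▸ List.isChain_nil
  | some u =>
    cases v? with
    | none => exact (partialUpToO_none_right.mp h) ▸ List.isChain_nil
    | some v => exact h.1

lemma dp_key
    (n m : ℕ) (ancG : Fin (n+1) → Fin (n+1)) (ancH : Fin (m+1) → Fin (m+1))
    (hG : ∀ v : Fin (n+1), v ≠ 0 → ancG v < v)
    (hH : ∀ v : Fin (m+1), v ≠ 0 → ancH v < v)
    {S : Type*} (φG : Fin (n+1) → S) (φH : Fin (m+1) → S)
    (w : S → S → ℝ) (hw : ∀ a b : S, 0 ≤ w a b)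
    (A : Option (Fin (n+1)) → Option (Fin (m+1)) → ℝ)
    (hAbase1 : ∀ v? : Option (Fin (m+1)), A none v? = 0)
    (hAbase2 : ∀ u? : Option (Fin (n+1)), A u? none = 0)
    (hArec : ∀ (u : Fin (n+1)) (v : Fin (m+1)),
      A (some u) (some v) =
        max (max (A (ancO ancG u) (some v)) (A (some u) (ancO ancH v)))
          (w (φG u) (φH v) + A (ancO ancG u) (ancO ancH v))) :
    ∀ (k : ℕ) (u? : Option (Fin (n+1))) (v? : Option (Fin (m+1))),
      (Option.elim u? 0 fun u => u.val + 1) + (Option.elim v? 0 fun v => v.val + 1) ≤ k →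
      (∀ p, PartialUpToO ancG ancH p u? v? → score w φG φH p ≤ A u? v?) ∧
      (∃ p, PartialUpToO ancG ancH p u? v? ∧ score w φG φH p = A u? v?) := by
  intro k
  induction k with
  | zero =>
    intro u? v? hk
    rcases u? with _ | u
    · refine ⟨fun p hp => ?_, ⟨[], partialUpToO_nil _ _ _ _, by simp [score_nil, hAbase1]⟩⟩
      rw [partialUpToO_none_left.mp hp, score_nil, hAbase1]
    · simp at hk
  | succ k IH =>
    intro u? v? hk
    rcases u? with _ | u
    · refine ⟨fun p hp => ?_, ⟨[], partialUpToO_nil _ _ _ _, by simp [score_nil, hAbase1]⟩⟩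
      rw [partialUpToO_none_left.mp hp, score_nil, hAbase1]
    rcases v? with _ | v
    · refine ⟨fun p hp => ?_, ⟨[], partialUpToO_nil _ _ _ _, by simp [score_nil, hAbase2]⟩⟩
      rw [partialUpToO_none_right.mp hp, score_nil, hAbase2]
    -- measure bounds
    have hk' : u.val + 1 + (v.val + 1) ≤ k + 1 := by simpa using hk
    have hmu : (Option.elim (ancO ancG u) 0 fun a => a.val + 1) ≤ u.val := by
      by_cases hu : u = 0
      · simp [ancO, hu]
      · have := Fin.lt_iff_val_lt_val.mp (hG u hu)
        simp only [ancO, if_neg hu, Option.elim]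
        omega
    have hmv : (Option.elim (ancO ancH v) 0 fun a => a.val + 1) ≤ v.val := by
      by_cases hv : v = 0
      · simp [ancO, hv]
      · have := Fin.lt_iff_val_lt_val.mp (hH v hv)
        simp only [ancO, if_neg hv, Option.elim]
        omega
    have he1 : (Option.elim (some u) 0 fun a : Fin (n+1) => a.val + 1) = u.val + 1 := rfl
    have he2 : (Option.elim (some v) 0 fun a : Fin (m+1) => a.val + 1) = v.val + 1 := rfl
    have IHa := IH (ancO ancG u) (some v) (by omega)
    have IHb := IH (some u) (ancO ancH v) (by omega)
    have IHc := IH (ancO ancG u) (ancO ancH v) (by omega)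
    have hA0 : 0 ≤ A (ancO ancG u) (ancO ancH v) := by
      have := IHc.1 [] (partialUpToO_nil _ _ _ _)
      simpa [score_nil] using this
    -- helper: PartialUpToO p' (ancO u) (ancO v) from chain facts
    constructor
    · -- upper bound
      intro p hp
      have hp' : PartialUpTo ancG ancH p u v := hp
      rcases List.eq_nil_or_concat p with rfl | ⟨p', q, hpq⟩
      · rw [score_nil, hArec]
        exact le_max_of_le_right (add_nonneg (hw _ _) hA0)
      rw [List.concat_eq_append] at hpq
      subst hpq
      obtain ⟨hch, hlast⟩ := hp'
      have hq := hlast q (by rw [List.getLast?_concat]; rfl)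
      rw [hArec, score_concat]
      rcases treeLe_cases' hq.1 with h1 | ⟨hu0, h1⟩
      · rcases treeLe_cases' hq.2 with h2 | ⟨hv0, h2⟩
        · -- q = (u, v); strip last element
          have hch' := List.isChain_append.mp hch
          have hrel : ∀ x ∈ p'.getLast?, TreeLt ancG x.1 q.1 ∧ TreeLt ancH x.2 q.2 := by
            intro x hx
            exact hch'.2.2 x hx q rfl
          have hp'' : PartialUpToO ancG ancH p' (ancO ancG u) (ancO ancH v) := by
            by_cases hu : u = 0
            · have hnil : p' = [] := by
                rcases List.eq_nil_or_concat p' with rfl | ⟨p'', q', hpq'⟩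
                · rfl
                · exfalso
                  rw [List.concat_eq_append] at hpq'
                  subst hpq'
                  have := (hrel q' (by rw [List.getLast?_concat]; rfl)).1
                  rw [h1, hu] at this
                  exact not_treeLt_zero _ _ this
              subst hnil
              exact partialUpToO_nil _ _ _ _
            by_cases hv : v = 0
            · have hnil : p' = [] := by
                rcases List.eq_nil_or_concat p' with rfl | ⟨p'', q', hpq'⟩
                · rfl
                · exfalso
                  rw [List.concat_eq_append] at hpq'
                  subst hpq'
                  have := (hrel q' (by rw [List.getLast?_concat]; rfl)).2
                  rw [h2, hv] at this
                  exact not_treeLt_zero _ _ this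
              subst hnil
              exact partialUpToO_nil _ _ _ _
            · rw [show ancO ancG u = some (ancG u) from if_neg hu,
                show ancO ancH v = some (ancH v) from if_neg hv]
              refine ⟨hch'.1, fun x hx => ?_⟩
              have hx1 := (hrel x hx).1
              have hx2 := (hrel x hx).2
              rw [h1] at hx1
              rw [h2] at hx2
              exact ⟨(treeLt_elim hx1).2, (treeLt_elim hx2).2⟩
          have := IHc.1 p' hp''
          rw [h1, h2]
          refine le_max_of_le_right ?_
          linarith
        · -- q.2 ≤ anc v, v ≠ 0
          have hp'' : PartialUpToO ancG ancH (p' ++ [q]) (some u) (ancO ancH v) := by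
            rw [show ancO ancH v = some (ancH v) from if_neg hv0]
            refine ⟨hch, fun x hx => ?_⟩
            rw [List.getLast?_concat] at hx
            cases hx
            exact ⟨hq.1, h2⟩
          have := IHb.1 (p' ++ [q]) hp''
          rw [score_concat] at this
          exact le_max_of_le_left (le_max_of_le_right this)
      · -- q.1 ≤ anc u, u ≠ 0
        have hp'' : PartialUpToO ancG ancH (p' ++ [q]) (ancO ancG u) (some v) := by
          rw [show ancO ancG u = some (ancG u) from if_neg hu0]
          refine ⟨hch, fun x hx => ?_⟩
          rw [List.getLast?_concat] at hx
          cases hx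
          exact ⟨h1, hq.2⟩
        have := IHa.1 (p' ++ [q]) hp''
        rw [score_concat] at this
        exact le_max_of_le_left (le_max_of_le_left this)
    · -- existence
      rw [hArec]
      rcases max_choice (max (A (ancO ancG u) (some v)) (A (some u) (ancO ancH v)))
          (w (φG u) (φH v) + A (ancO ancG u) (ancO ancH v)) with h | h <;> rw [h]
      · rcases max_choice (A (ancO ancG u) (some v)) (A (some u) (ancO ancH v)) with h' | h' <;>
          rw [h']
        · obtain ⟨p, hp, hs⟩ := IHa.2
          refine ⟨p, ?_, hs⟩
          by_cases hu : u = 0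
          · rw [show ancO ancG u = none from if_pos hu, partialUpToO_none_left] at hp
            subst hp
            exact partialUpTo_nil _ _ _ _
          · rw [show ancO ancG u = some (ancG u) from if_neg hu] at hp
            have hp' : PartialUpTo ancG ancH p (ancG u) v := hp
            exact ⟨hp'.1, fun x hx =>
              ⟨treeLe_of_le_anc ((hp'.2 x hx).1) hu, (hp'.2 x hx).2⟩⟩
        · obtain ⟨p, hp, hs⟩ := IHb.2
          refine ⟨p, ?_, hs⟩
          by_cases hv : v = 0
          · rw [show ancO ancH v = none from if_pos hv, partialUpToO_none_right] at hp
            subst hp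
            exact partialUpTo_nil _ _ _ _
          · rw [show ancO ancH v = some (ancH v) from if_neg hv] at hp
            have hp' : PartialUpTo ancG ancH p u (ancH v) := hp
            exact ⟨hp'.1, fun x hx =>
              ⟨(hp'.2 x hx).1, treeLe_of_le_anc ((hp'.2 x hx).2) hv⟩⟩
      · obtain ⟨p', hp', hs⟩ := IHc.2
        refine ⟨p' ++ [(u, v)], ?_, by rw [score_concat, hs]; ring⟩
        have hnil : (u = 0 ∨ v = 0) → p' = [] := by
          intro h0
          rcases h0 with h0 | h0
          · rw [show ancO ancG u = none from if_pos h0, partialUpToO_none_left] at hp'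
            exact hp'
          · rw [show ancO ancH v = none from if_pos h0, partialUpToO_none_right] at hp'
            exact hp'
        refine ⟨?_, fun x hx => ?_⟩
        · refine List.isChain_append.mpr
            ⟨validMatching_of_partialUpToO hp', List.isChain_singleton _, ?_⟩
          intro x hx y hy
          cases hy
          by_cases hu : u = 0
          · rw [hnil (Or.inl hu)] at hx; cases hx
          by_cases hv : v = 0
          · rw [hnil (Or.inr hv)] at hx; cases hx
          rw [show ancO ancG u = some (ancG u) from if_neg hu,
            show ancO ancH v = some (ancH v) from if_neg hv] at hp'
          have hp'' : PartialUpTo ancG ancH p' (ancG u) (ancH v) := hp'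
          exact ⟨treeLt_of_le_anc (hp''.2 x hx).1 hu, treeLt_of_le_anc (hp''.2 x hx).2 hv⟩
        · rw [List.getLast?_concat] at hx
          cases hx
          exact ⟨Relation.ReflTransGen.refl, Relation.ReflTransGen.refl⟩


/-- The maximum of the DP table entries over all (non-virtual) pairs `(u, v)`
equals the similarity score `s(G, H)`, the maximum of `s(p)` over all valid matchings `p`. -/
theorem max_dp_table_eq_similarity_score
    (n m : ℕ) (ancG : Fin (n+1) → Fin (n+1)) (ancH : Fin (m+1) → Fin (m+1))
    (hG : ∀ v : Fin (n+1), v ≠ 0 → ancG v < v)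
    (hH : ∀ v : Fin (m+1), v ≠ 0 → ancH v < v)
    {S : Type*} (φG : Fin (n+1) → S) (φH : Fin (m+1) → S)
    (w : S → S → ℝ) (hw : ∀ a b : S, 0 ≤ w a b)
    (A : Option (Fin (n+1)) → Option (Fin (m+1)) → ℝ)
    (hAbase1 : ∀ v? : Option (Fin (m+1)), A none v? = 0)
    (hAbase2 : ∀ u? : Option (Fin (n+1)), A u? none = 0)
    (hArec : ∀ (u : Fin (n+1)) (v : Fin (m+1)),
      A (some u) (some v) =
        max (max (A (ancO ancG u) (some v)) (A (some u) (ancO ancH v)))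
          (w (φG u) (φH v) + A (ancO ancG u) (ancO ancH v))) :
    IsGreatest {x : ℝ | ∃ p : List (Fin (n+1) × Fin (m+1)),
        ValidMatching ancG ancH p ∧ score w φG φH p = x}
      ((Finset.univ : Finset (Fin (n+1) × Fin (m+1))).sup' Finset.univ_nonempty
        (fun uv => A (some uv.1) (some uv.2))) := by
  have key := dp_key n m ancG ancH hG hH φG φH w hw A hAbase1 hAbase2 hArec
  constructor
  · obtain ⟨uv, -, huv⟩ := Finset.exists_mem_eq_sup' Finset.univ_nonempty
      (fun uv : Fin (n+1) × Fin (m+1) => A (some uv.1) (some uv.2))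
    obtain ⟨p, hp, hs⟩ := (key (uv.1.val + 1 + (uv.2.val + 1)) (some uv.1) (some uv.2)
      le_rfl).2
    have hp' : PartialUpTo ancG ancH p uv.1 uv.2 := hp
    exact ⟨p, hp'.1, by rw [hs, huv]⟩
  · rintro x ⟨p, hp, rfl⟩
    rcases List.eq_nil_or_concat p with rfl | ⟨p', q, hpq⟩
    · have h0 : (0 : ℝ) ≤ A (some (0 : Fin (n+1))) (some (0 : Fin (m+1))) := by
        have := (key 2 (some 0) (some 0) (by simp)).1 [] (partialUpToO_nil _ _ _ _)
        simpa [score_nil] using this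
      calc score w φG φH [] = 0 := score_nil _ _ _
        _ ≤ A (some (0 : Fin (n+1))) (some (0 : Fin (m+1))) := h0
        _ ≤ _ := Finset.le_sup' (fun uv : Fin (n+1) × Fin (m+1) => A (some uv.1) (some uv.2)) (Finset.mem_univ ((0 : Fin (n+1)), (0 : Fin (m+1))))
    · rw [List.concat_eq_append] at hpq
      subst hpq
      have hpu : PartialUpToO ancG ancH (p' ++ [q]) (some q.1) (some q.2) := by
        refine ⟨hp, fun x hx => ?_⟩
        rw [List.getLast?_concat] at hx
        cases hx
        exact ⟨Relation.ReflTransGen.refl, Relation.ReflTransGen.refl⟩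
      have := (key (q.1.val + 1 + (q.2.val + 1)) (some q.1) (some q.2) le_rfl).1
        (p' ++ [q]) hpu
      exact this.trans (Finset.le_sup' (fun uv : Fin (n+1) × Fin (m+1) => A (some uv.1) (some uv.2)) (Finset.mem_univ q))
end

section
/- There exists a valid matching p between G and H whose score attains the similarity score: s(p) = s(G,H) = max_{u ∈ {0,...,n}, v ∈ {0,...,m}} A_{u,v}; that is, the maximum over all valid matchings is attained by some valid matching. -/
lemma treeLe_of_anc_aux {k : ℕ} (anc : Fin (k+1) → Fin (k+1)) {a u : Fin (k+1)} (hu : u ≠ 0)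
    (h : TreeLe anc a (anc u)) : TreeLe anc a u :=
  h.tail ⟨hu, rfl⟩

lemma treeLt_of_le_anc_aux {k : ℕ} (anc : Fin (k+1) → Fin (k+1)) {a u : Fin (k+1)} (hu : u ≠ 0)
    (h : TreeLe anc a (anc u)) : TreeLt anc a u :=
  Relation.TransGen.tail' h ⟨hu, rfl⟩

lemma treeLe_cases_aux {k : ℕ} (anc : Fin (k+1) → Fin (k+1)) {a u : Fin (k+1)}
    (h : TreeLe anc a u) : a = u ∨ (u ≠ 0 ∧ TreeLe anc a (anc u)) := by
  rcases Relation.ReflTransGen.cases_tail h with h | ⟨c, hc, hcu⟩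
  · exact Or.inl h.symm
  · exact Or.inr ⟨hcu.1, hcu.2 ▸ hc⟩

lemma treeLt_elim_aux {k : ℕ} (anc : Fin (k+1) → Fin (k+1)) {a u : Fin (k+1)}
    (h : TreeLt anc a u) : u ≠ 0 ∧ TreeLe anc a (anc u) := by
  rcases Relation.TransGen.tail'_iff.mp h with ⟨c, hc, hcu⟩
  exact ⟨hcu.1, hcu.2 ▸ hc⟩

/-- rank of an extended node -/
def rkO {k : ℕ} (o : Option (Fin (k+1))) : ℕ := o.elim 0 (fun u => u.val + 1)

lemma rkO_ancO_le {k : ℕ} (anc : Fin (k+1) → Fin (k+1)) (h : ∀ v : Fin (k+1), v ≠ 0 → anc v < v)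
    (u : Fin (k+1)) : rkO (ancO anc u) ≤ u.val := by
  unfold ancO rkO
  split
  · simp
  · simpa [Nat.succ_le_iff] using (h u (by assumption))

lemma score_nonneg_aux {n m : ℕ} {S : Type*} (w : S → S → ℝ) (hw : ∀ a b : S, 0 ≤ w a b)
    (φG : Fin (n+1) → S) (φH : Fin (m+1) → S) (p : List (Fin (n+1) × Fin (m+1))) :
    0 ≤ score w φG φH p := by
  apply List.sum_nonneg
  intro x hx
  simp only [List.mem_map] at hx
  obtain ⟨q, _, rfl⟩ := hx
  exact hw _ _

lemma score_concat_aux {n m : ℕ} {S : Type*} (w : S → S → ℝ)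
    (φG : Fin (n+1) → S) (φH : Fin (m+1) → S) (p : List (Fin (n+1) × Fin (m+1)))
    (x : Fin (n+1) × Fin (m+1)) :
    score w φG φH (p ++ [x]) = score w φG φH p + w (φG x.1) (φH x.2) := by
  simp [score]

/-- There exists a valid matching `p` whose score attains the similarity score,
which equals the maximum of the DP table entries over all (non-virtual) pairs `(u, v)`. -/
theorem similarity_score_attained
    (n m : ℕ) (ancG : Fin (n+1) → Fin (n+1)) (ancH : Fin (m+1) → Fin (m+1))
    (hG : ∀ v : Fin (n+1), v ≠ 0 → ancG v < v)
    (hH : ∀ v : Fin (m+1), v ≠ 0 → ancH v < v)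
    {S : Type*} (φG : Fin (n+1) → S) (φH : Fin (m+1) → S)
    (w : S → S → ℝ) (hw : ∀ a b : S, 0 ≤ w a b)
    (A : Option (Fin (n+1)) → Option (Fin (m+1)) → ℝ)
    (hAbase1 : ∀ v? : Option (Fin (m+1)), A none v? = 0)
    (hAbase2 : ∀ u? : Option (Fin (n+1)), A u? none = 0)
    (hArec : ∀ (u : Fin (n+1)) (v : Fin (m+1)),
      A (some u) (some v) =
        max (max (A (ancO ancG u) (some v)) (A (some u) (ancO ancH v)))
          (w (φG u) (φH v) + A (ancO ancG u) (ancO ancH v))) :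
    ∃ p : List (Fin (n+1) × Fin (m+1)),
      ValidMatching ancG ancH p ∧
      IsGreatest {x : ℝ | ∃ q : List (Fin (n+1) × Fin (m+1)),
          ValidMatching ancG ancH q ∧ score w φG φH q = x} (score w φG φH p) ∧
      score w φG φH p =
        (Finset.univ : Finset (Fin (n+1) × Fin (m+1))).sup' Finset.univ_nonempty
          (fun uv => A (some uv.1) (some uv.2)) := by
  classical
  -- Existence: for every extended pair there is a partial matching attaining A.
  have exmain : ∀ (N : ℕ) (u? : Option (Fin (n+1))) (v? : Option (Fin (m+1))),
      rkO u? + rkO v? ≤ N →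
      ∃ q, PartialUpToO ancG ancH q u? v? ∧ score w φG φH q = A u? v? := by
    intro N
    induction N with
    | zero =>
      intro u? v? hr
      match u?, v? with
      | none, _ => exact ⟨[], rfl, by simp [score, hAbase1]⟩
      | some u, none => exact ⟨[], rfl, by simp [score, hAbase2]⟩
      | some u, some v => simp [rkO] at hr
    | succ N ih =>
      intro u? v? hr
      match u?, v? with
      | none, _ => exact ⟨[], rfl, by simp [score, hAbase1]⟩
      | some u, none => exact ⟨[], rfl, by simp [score, hAbase2]⟩
      | some u, some v =>
        have hru : rkO (ancO ancG u) ≤ u.val := rkO_ancO_le ancG hG u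
        have hrv : rkO (ancO ancH v) ≤ v.val := rkO_ancO_le ancH hH v
        have hr' : rkO (some u) + rkO (some v) ≤ N + 1 := hr
        have hrsum : u.val + 1 + (v.val + 1) ≤ N + 1 := hr
        have e1 : rkO (some v) = v.val + 1 := rfl
        have e2 : rkO (some u) = u.val + 1 := rfl
        have h1 : rkO (ancO ancG u) + rkO (some v) ≤ N := by omega
        have h2 : rkO (some u) + rkO (ancO ancH v) ≤ N := by omega
        have h3 : rkO (ancO ancG u) + rkO (ancO ancH v) ≤ N := by omega
        have hA := hArec u v
        rcases max_choice (max (A (ancO ancG u) (some v)) (A (some u) (ancO ancH v)))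
          (w (φG u) (φH v) + A (ancO ancG u) (ancO ancH v)) with hm | hm
        · rcases max_choice (A (ancO ancG u) (some v)) (A (some u) (ancO ancH v)) with hm' | hm'
          · -- A u v = A (anc u) v
            obtain ⟨q, hq, hs⟩ := ih (ancO ancG u) (some v) h1
            refine ⟨q, ?_, by rw [hs, hA, hm, hm']⟩
            by_cases hu : u = 0
            · have : q = [] := by simpa [PartialUpToO, ancO, hu] using hq
              subst this
              exact ⟨List.isChain_nil, by simp⟩
            · simp only [PartialUpToO, ancO, hu, if_neg] at hq ⊢
              refine ⟨hq.1, fun x hx => ?_⟩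
              obtain ⟨hx1, hx2⟩ := hq.2 x hx
              exact ⟨treeLe_of_anc_aux ancG hu hx1, hx2⟩
          · -- A u v = A u (anc v)
            obtain ⟨q, hq, hs⟩ := ih (some u) (ancO ancH v) h2
            refine ⟨q, ?_, by rw [hs, hA, hm, hm']⟩
            by_cases hv : v = 0
            · have : q = [] := by simpa [PartialUpToO, ancO, hv] using hq
              subst this
              exact ⟨List.isChain_nil, by simp⟩
            · simp only [PartialUpToO, ancO, hv, if_neg] at hq ⊢
              refine ⟨hq.1, fun x hx => ?_⟩
              obtain ⟨hx1, hx2⟩ := hq.2 x hx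
              exact ⟨hx1, treeLe_of_anc_aux ancH hv hx2⟩
        · -- A u v = w + A (anc u) (anc v)
          obtain ⟨q, hq, hs⟩ := ih (ancO ancG u) (ancO ancH v) h3
          refine ⟨q ++ [(u, v)], ?_, ?_⟩
          · have hvalid : ValidMatching ancG ancH (q ++ [(u, v)]) := by
              by_cases hu : u = 0
              · have : q = [] := by
                  revert hq; simp [PartialUpToO, ancO, hu]
                subst this
                simp [ValidMatching]; exact List.isChain_singleton _
              by_cases hv : v = 0
              · have : q = [] := by
                  revert hq; unfold PartialUpToO ancO; simp [hv]
                subst this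
                simp [ValidMatching]; exact List.isChain_singleton _
              simp only [PartialUpToO, ancO, hu, hv, if_neg] at hq
              unfold ValidMatching
              rw [List.Chain', List.isChain_append]
              refine ⟨hq.1, List.isChain_singleton _, fun x hx y hy => ?_⟩
              simp only [List.head?_cons, Option.mem_def, Option.some.injEq] at hy
              subst hy
              obtain ⟨hx1, hx2⟩ := hq.2 x hx
              exact ⟨treeLt_of_le_anc_aux ancG hu hx1, treeLt_of_le_anc_aux ancH hv hx2⟩
            refine ⟨hvalid, fun x hx => ?_⟩
            rw [List.getLast?_concat] at hx
            simp only [Option.mem_def, Option.some.injEq] at hx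
            subst hx
            exact ⟨Relation.ReflTransGen.refl, Relation.ReflTransGen.refl⟩
          · rw [score_concat_aux, hs, hA, hm]; ring
  -- Upper bound: every partial matching up to (u?, v?) has score ≤ A u? v?.
  have Anonneg : ∀ (u : Fin (n+1)) (v : Fin (m+1)), 0 ≤ A (some u) (some v) := by
    intro u v
    obtain ⟨q, _, hs⟩ := exmain (rkO (some u) + rkO (some v)) (some u) (some v) le_rfl
    rw [← hs]
    exact score_nonneg_aux w hw φG φH q
  have ubmain : ∀ (N : ℕ) (u? : Option (Fin (n+1))) (v? : Option (Fin (m+1))),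
      rkO u? + rkO v? ≤ N →
      ∀ q, PartialUpToO ancG ancH q u? v? → score w φG φH q ≤ A u? v? := by
    intro N
    induction N with
    | zero =>
      intro u? v? hr q hq
      match u?, v? with
      | none, _ => simp only [PartialUpToO] at hq; subst hq; simp [score, hAbase1]
      | some u, none => simp only [PartialUpToO] at hq; subst hq; simp [score, hAbase2]
      | some u, some v => simp [rkO] at hr
    | succ N ih =>
      intro u? v? hr q hq
      match u?, v? with
      | none, _ => simp only [PartialUpToO] at hq; subst hq; simp [score, hAbase1]
      | some u, none => simp only [PartialUpToO] at hq; subst hq; simp [score, hAbase2]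
      | some u, some v =>
        have hrsum : u.val + 1 + (v.val + 1) ≤ N + 1 := hr
        have hru : rkO (ancO ancG u) ≤ u.val := rkO_ancO_le ancG hG u
        have hrv : rkO (ancO ancH v) ≤ v.val := rkO_ancO_le ancH hH v
        have e1 : rkO (some v) = v.val + 1 := rfl
        have e2 : rkO (some u) = u.val + 1 := rfl
        have h1 : rkO (ancO ancG u) + rkO (some v) ≤ N := by omega
        have h2 : rkO (some u) + rkO (ancO ancH v) ≤ N := by omega
        have h3 : rkO (ancO ancG u) + rkO (ancO ancH v) ≤ N := by omega
        simp only [PartialUpToO] at hq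
        rcases List.eq_nil_or_concat q with rfl | ⟨q', x, rfl⟩
        · simpa [score] using Anonneg u v
        simp only [List.concat_eq_append] at hq ⊢
        have hlast : (q' ++ [x]).getLast? = some x := List.getLast?_concat
        obtain ⟨hle1, hle2⟩ := hq.2 x (by rw [hlast]; rfl)
        rcases treeLe_cases_aux ancG hle1 with hxu | ⟨hu0, hxanc⟩
        · rcases treeLe_cases_aux ancH hle2 with hxv | ⟨hv0, hxanc'⟩
          · -- x = (u, v): drop the last element
            have hx : x = (u, v) := Prod.ext hxu hxv
            subst hx
            have hchain := hq.1
            unfold ValidMatching at hchain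
            rw [List.Chain', List.isChain_append] at hchain
            obtain ⟨hc1, _, hc3⟩ := hchain
            have hq' : PartialUpToO ancG ancH q' (ancO ancG u) (ancO ancH v) := by
              by_cases hu : u = 0
              · have : q' = [] := by
                  rcases List.eq_nil_or_concat q' with rfl | ⟨q'', y, rfl⟩
                  · rfl
                  · exfalso
                    have hy := hc3 y (by simp [List.concat_eq_append]) (u, v) rfl
                    exact (treeLt_elim_aux ancG hy.1).1 hu
                subst this
                simp [PartialUpToO, ancO, hu]
              by_cases hv : v = 0
              · have : q' = [] := by
                  rcases List.eq_nil_or_concat q' with rfl | ⟨q'', y, rfl⟩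
                  · rfl
                  · exfalso
                    have hy := hc3 y (by simp [List.concat_eq_append]) (u, v) rfl
                    exact (treeLt_elim_aux ancH hy.2).1 hv
                subst this
                simp [PartialUpToO, ancO, hv]
              simp only [PartialUpToO, ancO, hu, hv, if_neg]
              refine ⟨hc1, fun y hy => ?_⟩
              have hy' := hc3 y hy (u, v) rfl
              exact ⟨(treeLt_elim_aux ancG hy'.1).2, (treeLt_elim_aux ancH hy'.2).2⟩
            have := ih (ancO ancG u) (ancO ancH v) h3 q' hq'
            rw [score_concat_aux]
            calc score w φG φH q' + w (φG u) (φH v)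
                ≤ A (ancO ancG u) (ancO ancH v) + w (φG u) (φH v) := by linarith
              _ = w (φG u) (φH v) + A (ancO ancG u) (ancO ancH v) := by ring
              _ ≤ A (some u) (some v) := by rw [hArec u v]; exact le_max_right _ _
          · -- x.2 strictly below v
            have hq' : PartialUpToO ancG ancH (q' ++ [x]) (some u) (ancO ancH v) := by
              simp only [PartialUpToO, ancO, hv0, if_neg]
              refine ⟨hq.1, fun y hy => ?_⟩
              rw [hlast] at hy
              simp only [Option.mem_def, Option.some.injEq] at hy
              subst hy
              exact ⟨hle1, hxanc'⟩
            calc score w φG φH (q' ++ [x]) ≤ A (some u) (ancO ancH v) :=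
                ih (some u) (ancO ancH v) h2 _ hq'
              _ ≤ A (some u) (some v) := by
                rw [hArec u v]
                exact le_trans (le_max_right _ _) (le_max_left _ _)
        · -- x.1 strictly below u
          have hq' : PartialUpToO ancG ancH (q' ++ [x]) (ancO ancG u) (some v) := by
            simp only [PartialUpToO, ancO, hu0, if_neg]
            refine ⟨hq.1, fun y hy => ?_⟩
            rw [hlast] at hy
            simp only [Option.mem_def, Option.some.injEq] at hy
            subst hy
            exact ⟨hxanc, hle2⟩
          calc score w φG φH (q' ++ [x]) ≤ A (ancO ancG u) (some v) :=
              ih (ancO ancG u) (some v) h1 _ hq'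
            _ ≤ A (some u) (some v) := by
              rw [hArec u v]
              exact le_trans (le_max_left _ _) (le_max_left _ _)
  -- assemble
  obtain ⟨uv, huv, hsup⟩ := Finset.exists_mem_eq_sup' (Finset.univ_nonempty
    (α := Fin (n+1) × Fin (m+1))) (fun uv => A (some uv.1) (some uv.2))
  obtain ⟨p, hp, hps⟩ := exmain (rkO (some uv.1) + rkO (some uv.2)) (some uv.1) (some uv.2) le_rfl
  simp only [PartialUpToO] at hp
  refine ⟨p, hp.1, ⟨⟨p, hp.1, rfl⟩, ?_⟩, by rw [hps, hsup]⟩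
  rintro x ⟨q, hq, rfl⟩
  rw [hps, ← hsup]
  rcases List.eq_nil_or_concat q with rfl | ⟨q', y, rfl⟩
  · simp only [score, List.map_nil, List.sum_nil]
    exact le_trans (Anonneg uv.1 uv.2)
      (Finset.le_sup' (fun uv => A (some uv.1) (some uv.2)) (Finset.mem_univ uv))
  · simp only [List.concat_eq_append] at hq ⊢
    have hq' : PartialUpToO ancG ancH (q' ++ [y]) (some y.1) (some y.2) := by
      refine ⟨hq, fun z hz => ?_⟩
      rw [List.getLast?_concat] at hz
      simp only [Option.mem_def, Option.some.injEq] at hz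
      subst hz
      exact ⟨Relation.ReflTransGen.refl, Relation.ReflTransGen.refl⟩
    exact le_trans (ubmain _ (some y.1) (some y.2) le_rfl _ hq')
      (Finset.le_sup' (fun uv => A (some uv.1) (some uv.2)) (Finset.mem_univ y))
end
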